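/- One-step soundness of the abstract decision-tree learner: Let T be a finite training set of labeled examples over 𝒳 × Fin k, n : ℕ, Φ a finite set of decidable predicates on inputs, x an input, and T' ∈ Δₙ(T). Suppose φ' ∈ Φ splits T' non-trivially and score(T', φ') ≤ score(T', ψ) for every ψ ∈ Φ splitting T' non-trivially. Let Ψ = bestSplit#(⟨T, n⟩), defined as Φ_∃ if Φ_∀ = ∅, and otherwise {φ ∈ Φ_∃ : sInf(score#(⟨T, n⟩, φ)) ≤ min_{ψ ∈ Φ_∀} sSup(score#(⟨T, n⟩, ψ))}. Then: (i) φ' ∈ Ψ; and (ii) filter(T', φ', x) ∈ γ(A), where A is the left fold of ⊔ over the (nonempty) list of abstract training sets ⟨T, n⟩|#φ for each φ ∈ Ψ with φ(x) followed by ⟨T, n⟩|#¬φ for each φ ∈ Ψ with ¬φ(x). -/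

import Mathlib

/-- The n-poisoning perturbed set: all subsets of `T` missing at most `n` elements. -/
def Perturb {α : Type*} [DecidableEq α] (T : Finset α) (n : ℕ) : Set (Finset α) :=
  {T' | T' ⊆ T ∧ (T \ T').card ≤ n}

/-- Concretization of an abstract training set `⟨T, n⟩`. -/
def aGamma {α : Type*} [DecidableEq α] (A : Finset α × ℕ) : Set (Finset α) :=
  Perturb A.1 A.2

/-- Join of abstract training sets. -/
def aJoin {α : Type*} [DecidableEq α] (A B : Finset α × ℕ) : Finset α × ℕ :=
  (A.1 ∪ B.1, max ((A.1 \ B.1).card + B.2) ((B.1 \ A.1).card + A.2))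

variable {X : Type*} [DecidableEq X] {k : ℕ}

/-- `cnt T i` is the number of elements of `T` with class label `i`. -/
def cnt (T : Finset (X × Fin k)) (i : Fin k) : ℕ :=
  (T.filter fun e => e.2 = i).card

/-- The class probability `pᵢ(T) = cᵢ(T) / |T|` (with `pᵢ(∅) = 0` by `0/0 = 0`). -/
noncomputable def cprob (T : Finset (X × Fin k)) (i : Fin k) : ℝ :=
  (cnt T i : ℝ) / (T.card : ℝ)

/-- The abstract class-probability transformer. -/
noncomputable def cprobAbs (T : Finset (X × Fin k)) (n : ℕ) (i : Fin k) : Set ℝ :=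
  if n < T.card then
    {p | ∃ a b : ℝ, max 0 ((cnt T i : ℝ) - n) ≤ a ∧ a ≤ (cnt T i : ℝ) ∧
      (T.card : ℝ) - n ≤ b ∧ b ≤ (T.card : ℝ) ∧ p = a / b}
  else Set.Icc (0 : ℝ) 1

/-- The Gini impurity `ent(T) = Σᵢ pᵢ(T)(1 − pᵢ(T))`. -/
noncomputable def gini (T : Finset (X × Fin k)) : ℝ :=
  ∑ i : Fin k, cprob T i * (1 - cprob T i)

/-- The abstract Gini impurity. -/
noncomputable def giniAbs (T : Finset (X × Fin k)) (n : ℕ) : Set ℝ :=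
  {e | ∃ q q' : Fin k → ℝ, (∀ i, q i ∈ cprobAbs T n i) ∧ (∀ i, q' i ∈ cprobAbs T n i) ∧
    e = ∑ i : Fin k, q i * (1 - q' i)}

/-- `T|φ`. -/
def restr (T : Finset (X × Fin k)) (φ : X → Bool) : Finset (X × Fin k) :=
  T.filter fun e => φ e.1 = true

/-- `T|¬φ`. -/
def restrNeg (T : Finset (X × Fin k)) (φ : X → Bool) : Finset (X × Fin k) :=
  T.filter fun e => φ e.1 = false

/-- The concrete score `score(T, φ) = |T|φ| · ent(T|φ) + |T|¬φ| · ent(T|¬φ)`. -/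
noncomputable def scoreC (T : Finset (X × Fin k)) (φ : X → Bool) : ℝ :=
  ((restr T φ).card : ℝ) * gini (restr T φ) + ((restrNeg T φ).card : ℝ) * gini (restrNeg T φ)

/-- The abstract score `score#(⟨T, n⟩, φ)`. -/
noncomputable def scoreAbs (T : Finset (X × Fin k)) (n : ℕ) (φ : X → Bool) : Set ℝ :=
  {s | ∃ m₁ e₁ m₂ e₂ : ℝ,
    ((restr T φ).card : ℝ) - (min n (restr T φ).card : ℕ) ≤ m₁ ∧
    m₁ ≤ ((restr T φ).card : ℝ) ∧
    e₁ ∈ giniAbs (restr T φ) (min n (restr T φ).card) ∧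
    ((restrNeg T φ).card : ℝ) - (min n (restrNeg T φ).card : ℕ) ≤ m₂ ∧
    m₂ ≤ ((restrNeg T φ).card : ℝ) ∧
    e₂ ∈ giniAbs (restrNeg T φ) (min n (restrNeg T φ).card) ∧
    s = m₁ * e₁ + m₂ * e₂}

/-- `φ` splits `T'` trivially if `T'|φ = ∅` or `T'|φ = T'`. -/
def trivialSplit (T' : Finset (X × Fin k)) (φ : X → Bool) : Prop :=
  restr T' φ = ∅ ∨ restr T' φ = T'

/-- `Φ_∀ = {φ ∈ Φ : n < |T|φ| ∧ n < |T|¬φ|}`. -/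
def PhiAll (T : Finset (X × Fin k)) (n : ℕ) (Φ : List (X → Bool)) : Set (X → Bool) :=
  {φ | φ ∈ Φ ∧ n < (restr T φ).card ∧ n < (restrNeg T φ).card}

/-- `Φ_∃ = {φ ∈ Φ : T|φ ≠ ∅ ∧ T|¬φ ≠ ∅}`. -/
def PhiEx (T : Finset (X × Fin k)) (Φ : List (X → Bool)) : Set (X → Bool) :=
  {φ | φ ∈ Φ ∧ restr T φ ≠ ∅ ∧ restrNeg T φ ≠ ∅}

/-- Abstract restriction `⟨T, n⟩|#φ = ⟨T|φ, min(n, |T|φ|)⟩`. -/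
def aRestrict (T : Finset (X × Fin k)) (n : ℕ) (φ : X × Fin k → Prop)
    [DecidablePred φ] : Finset (X × Fin k) × ℕ :=
  (T.filter φ, min n (T.filter φ).card)

/-- The concrete filter: `T'|φ'` if `φ'(x)` holds, and `T'|¬φ'` otherwise. -/
def cFilter (T' : Finset (X × Fin k)) (φ : X → Bool) (x : X) : Finset (X × Fin k) :=
  if φ x then T'.filter (fun e => φ e.1 = true) else T'.filter (fun e => φ e.1 = false)

/-- The list of abstract training sets `⟨T, n⟩|#φ` for each `φ ∈ Ψ` with `φ(x)`,
followed by `⟨T, n⟩|#¬φ` for each `φ ∈ Ψ` with `¬φ(x)`. -/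
def filterList (T : Finset (X × Fin k)) (n : ℕ) (Ψ : List (X → Bool)) (x : X) :
    List (Finset (X × Fin k) × ℕ) :=
  (Ψ.filter fun φ => φ x).map (fun φ => aRestrict T n (fun e => φ e.1 = true)) ++
  (Ψ.filter fun φ => !(φ x)).map (fun φ => aRestrict T n (fun e => φ e.1 = false))


section AuxJoin
variable {α : Type*} [DecidableEq α]

lemma aGamma_join_left (A B : Finset α × ℕ) : aGamma A ⊆ aGamma (aJoin A B) := by
  rintro S ⟨hsub, hcard⟩
  refine ⟨hsub.trans Finset.subset_union_left, ?_⟩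
  have h1 : (A.1 ∪ B.1) \ S ⊆ (B.1 \ A.1) ∪ (A.1 \ S) := by
    intro a ha
    simp only [Finset.mem_sdiff, Finset.mem_union] at *
    tauto
  calc ((A.1 ∪ B.1) \ S).card ≤ ((B.1 \ A.1) ∪ (A.1 \ S)).card := Finset.card_le_card h1
    _ ≤ (B.1 \ A.1).card + (A.1 \ S).card := Finset.card_union_le _ _
    _ ≤ (B.1 \ A.1).card + A.2 := by omega
    _ ≤ _ := le_max_right _ _

lemma aGamma_join_right (A B : Finset α × ℕ) : aGamma B ⊆ aGamma (aJoin A B) := by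
  rintro S ⟨hsub, hcard⟩
  refine ⟨hsub.trans Finset.subset_union_right, ?_⟩
  have h1 : (A.1 ∪ B.1) \ S ⊆ (A.1 \ B.1) ∪ (B.1 \ S) := by
    intro a ha
    simp only [Finset.mem_sdiff, Finset.mem_union] at *
    tauto
  calc ((A.1 ∪ B.1) \ S).card ≤ ((A.1 \ B.1) ∪ (B.1 \ S)).card := Finset.card_le_card h1
    _ ≤ (A.1 \ B.1).card + (B.1 \ S).card := Finset.card_union_le _ _
    _ ≤ (A.1 \ B.1).card + B.2 := by omega
    _ ≤ _ := le_max_left _ _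

lemma aGamma_foldl_init (L : List (Finset α × ℕ)) (I : Finset α × ℕ) :
    aGamma I ⊆ aGamma (L.foldl aJoin I) := by
  induction L generalizing I with
  | nil => exact le_refl _
  | cons b t ih => exact (aGamma_join_left I b).trans (ih _)

lemma aGamma_foldl_mem {L : List (Finset α × ℕ)} {a : Finset α × ℕ} (h : a ∈ L)
    (I : Finset α × ℕ) : aGamma a ⊆ aGamma (L.foldl aJoin I) := by
  induction L generalizing I with
  | nil => simp at h
  | cons b t ih =>
    rcases List.mem_cons.1 h with rfl | h
    · exact (aGamma_join_right I a).trans (aGamma_foldl_init t _)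
    · exact ih h _

lemma mem_gamma_fold {L : List (Finset α × ℕ)} {a : Finset α × ℕ} (ha : a ∈ L)
    {S : Finset α} (hS : S ∈ aGamma a) :
    S ∈ aGamma (L.tail.foldl aJoin L.headI) := by
  cases L with
  | nil => simp at ha
  | cons h t =>
    rcases List.mem_cons.1 ha with rfl | ha
    · exact aGamma_foldl_init t a hS
    · exact aGamma_foldl_mem ha h hS

lemma perturb_card_le {T T' : Finset α} {n : ℕ} (h : T' ∈ Perturb T n) :
    T.card ≤ T'.card + n := by
  obtain ⟨hsub, hcard⟩ := h
  have := Finset.card_le_card_sdiff_add_card (s := T) (t := T')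
  omega

lemma perturb_filter {T T' : Finset α} {n : ℕ} (h : T' ∈ Perturb T n)
    (p : α → Prop) [DecidablePred p] :
    T'.filter p ∈ Perturb (T.filter p) (min n (T.filter p).card) := by
  obtain ⟨hsub, hcard⟩ := h
  refine ⟨Finset.filter_subset_filter p hsub, le_min ?_ ?_⟩
  · calc (T.filter p \ T'.filter p).card ≤ ((T \ T').filter p).card := by
          apply Finset.card_le_card
          intro a ha
          simp only [Finset.mem_sdiff, Finset.mem_filter] at *
          tauto
      _ ≤ (T \ T').card := Finset.card_filter_le _ _
      _ ≤ n := hcard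
  · exact Finset.card_le_card (Finset.sdiff_subset)

end AuxJoin

section AuxCnt
variable {X : Type*} [DecidableEq X] {k : ℕ}

lemma cnt_le_card (T : Finset (X × Fin k)) (i : Fin k) : cnt T i ≤ T.card :=
  Finset.card_filter_le _ _

lemma cnt_mono {T T' : Finset (X × Fin k)} (h : T' ⊆ T) (i : Fin k) :
    cnt T' i ≤ cnt T i :=
  Finset.card_le_card (Finset.filter_subset_filter _ h)

lemma cnt_sub {T T' : Finset (X × Fin k)} {n : ℕ} (h : T' ∈ Perturb T n) (i : Fin k) :
    cnt T i ≤ cnt T' i + n := by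
  have h2 := perturb_filter h (fun e => e.2 = i)
  have h3 := perturb_card_le h2
  unfold cnt
  omega

lemma cprob_mem {T T' : Finset (X × Fin k)} {n : ℕ} (h : T' ∈ Perturb T n) (i : Fin k) :
    cprob T' i ∈ cprobAbs T n i := by
  unfold cprob cprobAbs
  split_ifs with hn
  · refine ⟨(cnt T' i : ℝ), (T'.card : ℝ), ?_, ?_, ?_, ?_, rfl⟩
    · refine max_le (by positivity) ?_
      have := cnt_sub h i
      have : (cnt T i : ℝ) ≤ (cnt T' i : ℝ) + n := by exact_mod_cast this
      linarith
    · exact_mod_cast cnt_mono h.1 i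
    · have := perturb_card_le h
      have : (T.card : ℝ) ≤ (T'.card : ℝ) + n := by exact_mod_cast this
      linarith
    · exact_mod_cast Finset.card_le_card h.1
  · constructor
    · positivity
    · rcases Nat.eq_zero_or_pos T'.card with h0 | h0
      · simp [h0]
      · rw [div_le_one (by exact_mod_cast h0)]
        exact_mod_cast cnt_le_card T' i

lemma gini_mem {T T' : Finset (X × Fin k)} {n : ℕ} (h : T' ∈ Perturb T n) :
    gini T' ∈ giniAbs T n :=
  ⟨cprob T', cprob T', fun i => cprob_mem h i, fun i => cprob_mem h i, rfl⟩

lemma score_mem {T T' : Finset (X × Fin k)} {n : ℕ} (h : T' ∈ Perturb T n) (φ : X → Bool) :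
    scoreC T' φ ∈ scoreAbs T n φ := by
  have h1 : restr T' φ ∈ Perturb (restr T φ) (min n (restr T φ).card) :=
    perturb_filter h (fun e => φ e.1 = true)
  have h2 : restrNeg T' φ ∈ Perturb (restrNeg T φ) (min n (restrNeg T φ).card) :=
    perturb_filter h (fun e => φ e.1 = false)
  refine ⟨((restr T' φ).card : ℝ), gini (restr T' φ),
    ((restrNeg T' φ).card : ℝ), gini (restrNeg T' φ), ?_, ?_, gini_mem h1, ?_, ?_,
    gini_mem h2, rfl⟩
  · have h3 : ((restr T φ).card : ℝ) ≤ ((restr T' φ).card : ℝ)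
        + ((min n (restr T φ).card : ℕ) : ℝ) := by exact_mod_cast perturb_card_le h1
    linarith
  · exact_mod_cast Finset.card_le_card h1.1
  · have h3 : ((restrNeg T φ).card : ℝ) ≤ ((restrNeg T' φ).card : ℝ)
        + ((min n (restrNeg T φ).card : ℕ) : ℝ) := by exact_mod_cast perturb_card_le h2
    linarith
  · exact_mod_cast Finset.card_le_card h2.1

lemma cprobAbs_bdd {T : Finset (X × Fin k)} {n : ℕ} {i : Fin k} {p : ℝ}
    (hp : p ∈ cprobAbs T n i) : 0 ≤ p ∧ p ≤ (T.card : ℝ) + 1 := by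
  unfold cprobAbs at hp
  split_ifs at hp with hn
  · obtain ⟨a, b, h1, h2, h3, h4, rfl⟩ := hp
    have ha0 : 0 ≤ a := le_trans (le_max_left _ _) h1
    have hb1 : (1 : ℝ) ≤ b := by
      have : (n : ℝ) + 1 ≤ (T.card : ℝ) := by exact_mod_cast hn
      linarith
    have hcnt : (cnt T i : ℝ) ≤ (T.card : ℝ) := by exact_mod_cast cnt_le_card T i
    constructor
    · exact div_nonneg ha0 (by linarith)
    · calc a / b ≤ a := div_le_self ha0 hb1
        _ ≤ (cnt T i : ℝ) := h2
        _ ≤ (T.card : ℝ) + 1 := by linarith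
  · refine ⟨hp.1, le_trans hp.2 ?_⟩
    have : (0:ℝ) ≤ (T.card : ℝ) := Nat.cast_nonneg _
    linarith

lemma giniAbs_bdd {T : Finset (X × Fin k)} {n : ℕ} {e : ℝ}
    (he : e ∈ giniAbs T n) : |e| ≤ k * ((T.card : ℝ) + 1) ^ 2 := by
  obtain ⟨q, q', hq, hq', rfl⟩ := he
  set B : ℝ := (T.card : ℝ) + 1 with hB
  have hB1 : (1 : ℝ) ≤ B := by
    have : (0:ℝ) ≤ (T.card : ℝ) := Nat.cast_nonneg _
    simp only [hB]; linarith
  calc |∑ i : Fin k, q i * (1 - q' i)| ≤ ∑ i : Fin k, |q i * (1 - q' i)| :=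
        Finset.abs_sum_le_sum_abs _ _
    _ ≤ ∑ _i : Fin k, B ^ 2 := by
        apply Finset.sum_le_sum
        intro i _
        rw [abs_mul]
        have h1 := cprobAbs_bdd (hq i)
        have h2 := cprobAbs_bdd (hq' i)
        have : |q i| ≤ B := by rw [abs_of_nonneg h1.1]; exact h1.2
        have h3 : |1 - q' i| ≤ B := by
          rw [abs_le]; constructor <;> [linarith [h2.2]; linarith [h2.1]]
        calc |q i| * |1 - q' i| ≤ B * B := by
              exact mul_le_mul this h3 (abs_nonneg _) (by linarith)
          _ = B ^ 2 := (sq B).symm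
    _ = k * B ^ 2 := by simp [Finset.sum_const, Finset.card_univ]
    
lemma scoreAbs_abs_bdd {T : Finset (X × Fin k)} {n : ℕ} {φ : X → Bool} {s : ℝ}
    (hs : s ∈ scoreAbs T n φ) :
    |s| ≤ ((restr T φ).card : ℝ) * (k * (((restr T φ).card : ℝ) + 1) ^ 2)
      + ((restrNeg T φ).card : ℝ) * (k * (((restrNeg T φ).card : ℝ) + 1) ^ 2) := by
  obtain ⟨m₁, e₁, m₂, e₂, hm1a, hm1b, he1, hm2a, hm2b, he2, rfl⟩ := hs
  have hb1 := giniAbs_bdd he1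
  have hb2 := giniAbs_bdd he2
  have hm10 : 0 ≤ m₁ := by
    have : (min n (restr T φ).card : ℕ) ≤ ((restr T φ).card : ℕ) := min_le_right _ _
    have : ((min n (restr T φ).card : ℕ) : ℝ) ≤ ((restr T φ).card : ℝ) := by exact_mod_cast this
    linarith
  have hm20 : 0 ≤ m₂ := by
    have : (min n (restrNeg T φ).card : ℕ) ≤ ((restrNeg T φ).card : ℕ) := min_le_right _ _
    have : ((min n (restrNeg T φ).card : ℕ) : ℝ) ≤ ((restrNeg T φ).card : ℝ) := by
      exact_mod_cast this
    linarith
  calc |m₁ * e₁ + m₂ * e₂| ≤ |m₁ * e₁| + |m₂ * e₂| := abs_add_le _ _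
    _ = m₁ * |e₁| + m₂ * |e₂| := by rw [abs_mul, abs_mul, abs_of_nonneg hm10, abs_of_nonneg hm20]
    _ ≤ _ := by
        apply add_le_add
        · exact mul_le_mul hm1b hb1 (abs_nonneg _) (Nat.cast_nonneg _)
        · exact mul_le_mul hm2b hb2 (abs_nonneg _) (Nat.cast_nonneg _)

lemma scoreAbs_bddBelow (T : Finset (X × Fin k)) (n : ℕ) (φ : X → Bool) :
    BddBelow (scoreAbs T n φ) :=
  ⟨-(((restr T φ).card : ℝ) * (k * (((restr T φ).card : ℝ) + 1) ^ 2)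
      + ((restrNeg T φ).card : ℝ) * (k * (((restrNeg T φ).card : ℝ) + 1) ^ 2)),
    fun s hs => neg_le_of_abs_le (scoreAbs_abs_bdd hs)⟩

lemma scoreAbs_bddAbove (T : Finset (X × Fin k)) (n : ℕ) (φ : X → Bool) :
    BddAbove (scoreAbs T n φ) :=
  ⟨((restr T φ).card : ℝ) * (k * (((restr T φ).card : ℝ) + 1) ^ 2)
      + ((restrNeg T φ).card : ℝ) * (k * (((restrNeg T φ).card : ℝ) + 1) ^ 2),
    fun s hs => le_of_abs_le (scoreAbs_abs_bdd hs)⟩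

lemma nontrivial_of_phiAll {T T' : Finset (X × Fin k)} {n : ℕ} (h : T' ∈ Perturb T n)
    {ψ : X → Bool} (h1 : n < (restr T ψ).card) (h2 : n < (restrNeg T ψ).card) :
    ¬ trivialSplit T' ψ := by
  have hp1 : restr T' ψ ∈ Perturb (restr T ψ) (min n (restr T ψ).card) :=
    perturb_filter h (fun e => ψ e.1 = true)
  have hp2 : restrNeg T' ψ ∈ Perturb (restrNeg T ψ) (min n (restrNeg T ψ).card) :=
    perturb_filter h (fun e => ψ e.1 = false)
  have hc1 := perturb_card_le hp1
  have hc2 := perturb_card_le hp2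
  have hpos1 : 0 < (restr T' ψ).card := by omega
  have hpos2 : 0 < (restrNeg T' ψ).card := by omega
  rintro (he | he)
  · rw [he] at hpos1; simp at hpos1
  · have hemp : restrNeg T' ψ = ∅ := by
      rw [Finset.eq_empty_iff_forall_notMem]
      intro e hem
      have hf : ψ e.1 = false := (Finset.mem_filter.1 hem).2
      have h5 : e ∈ restr T' ψ := by
        rw [he]; exact (Finset.mem_filter.1 hem).1
      have ht : ψ e.1 = true := (Finset.mem_filter.1 h5).2
      rw [ht] at hf; exact Bool.noConfusion hf
    rw [hemp] at hpos2; simp at hpos2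

lemma phiEx_of_nontrivial {T T' : Finset (X × Fin k)} {n : ℕ} (h : T' ∈ Perturb T n)
    {φ : X → Bool} (hnt : ¬ trivialSplit T' φ) :
    restr T φ ≠ ∅ ∧ restrNeg T φ ≠ ∅ := by
  unfold trivialSplit at hnt
  push_neg at hnt
  obtain ⟨h1, h2⟩ := hnt
  have hneg : restrNeg T' φ ≠ ∅ := by
    intro he
    apply h2
    unfold restrNeg at he
    rw [Finset.filter_eq_empty_iff] at he
    unfold restr
    apply Finset.filter_true_of_mem
    intro e heT'
    have := he heT'
    simpa using this
  constructor
  · intro he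
    apply Finset.nonempty_iff_ne_empty.1 h1
    have : restr T' φ ⊆ restr T φ := Finset.filter_subset_filter _ h.1
    rw [he] at this
    exact Finset.subset_empty.1 this
  · intro he
    apply hneg
    have : restrNeg T' φ ⊆ restrNeg T φ := Finset.filter_subset_filter _ h.1
    rw [he] at this
    exact Finset.subset_empty.1 this

end AuxCnt

/-- One-step soundness of the abstract decision-tree learner: if `φ' ∈ Φ`
non-trivially splits `T' ∈ Δₙ(T)` with minimal score among non-trivial splits,
and `Ψ = bestSplit#(⟨T, n⟩)` (which equals `Φ_∃` when `Φ_∀ = ∅`, and otherwise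
`{φ ∈ Φ_∃ : sInf(score#(⟨T, n⟩, φ)) ≤ min_{ψ ∈ Φ_∀} sSup(score#(⟨T, n⟩, ψ))}`),
then (i) `φ' ∈ Ψ`, and (ii) for any list `l` enumerating `Ψ`,
`filter(T', φ', x) ∈ γ(A)` where `A` is the left fold of `⊔` over the list
`filterList T n l x` starting from its head. -/
theorem abstract_learner_step_sound (hk : 1 ≤ k)
    (T : Finset (X × Fin k)) (n : ℕ) (Φ : List (X → Bool)) (x : X)
    (T' : Finset (X × Fin k)) (hT' : T' ∈ Perturb T n)
    (φ' : X → Bool) (hφ'Φ : φ' ∈ Φ)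
    (hnt : ¬ trivialSplit T' φ')
    (hmin : ∀ ψ ∈ Φ, ¬ trivialSplit T' ψ → scoreC T' φ' ≤ scoreC T' ψ)
    (Ψ : Set (X → Bool))
    (hΨ₁ : PhiAll T n Φ = ∅ → Ψ = PhiEx T Φ)
    (hΨ₂ : PhiAll T n Φ ≠ ∅ → Ψ = {φ ∈ PhiEx T Φ |
      sInf (scoreAbs T n φ) ≤ sInf {s | ∃ ψ ∈ PhiAll T n Φ, s = sSup (scoreAbs T n ψ)}}) :
    φ' ∈ Ψ ∧
    ∀ l : List (X → Bool), (∀ φ, φ ∈ l ↔ φ ∈ Ψ) →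
      cFilter T' φ' x ∈
        aGamma ((filterList T n l x).tail.foldl aJoin (filterList T n l x).headI) := by
  obtain ⟨hEx1, hEx2⟩ := phiEx_of_nontrivial hT' hnt
  have hφ'Ex : φ' ∈ PhiEx T Φ := ⟨hφ'Φ, hEx1, hEx2⟩
  have hmem : φ' ∈ Ψ := by
    by_cases hPA : PhiAll T n Φ = ∅
    · rw [hΨ₁ hPA]; exact hφ'Ex
    · rw [hΨ₂ hPA]
      refine ⟨hφ'Ex, ?_⟩
      apply le_csInf
      · obtain ⟨ψ₀, hψ₀⟩ := Set.nonempty_iff_ne_empty.2 hPA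
        exact ⟨sSup (scoreAbs T n ψ₀), ψ₀, hψ₀, rfl⟩
      · rintro b ⟨ψ, hψ, rfl⟩
        have hnt' : ¬ trivialSplit T' ψ := nontrivial_of_phiAll hT' hψ.2.1 hψ.2.2
        calc sInf (scoreAbs T n φ') ≤ scoreC T' φ' :=
              csInf_le (scoreAbs_bddBelow T n φ') (score_mem hT' φ')
          _ ≤ scoreC T' ψ := hmin ψ hψ.1 hnt'
          _ ≤ sSup (scoreAbs T n ψ) :=
              le_csSup (scoreAbs_bddAbove T n ψ) (score_mem hT' ψ)
  refine ⟨hmem, ?_⟩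
  intro l hl
  have hφ'l : φ' ∈ l := (hl φ').2 hmem
  cases hx : φ' x with
  | true =>
    have ha : aRestrict T n (fun e => φ' e.1 = true) ∈ filterList T n l x := by
      apply List.mem_append_left
      exact List.mem_map.2 ⟨φ', List.mem_filter.2 ⟨hφ'l, by simp [hx]⟩, rfl⟩
    have hmemg : cFilter T' φ' x ∈ aGamma (aRestrict T n (fun e => φ' e.1 = true)) := by
      simp only [cFilter, hx, if_true]
      exact perturb_filter hT' (fun e => φ' e.1 = true)
    exact mem_gamma_fold ha hmemg
  | false =>
    have ha : aRestrict T n (fun e => φ' e.1 = false) ∈ filterList T n l x := by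
      apply List.mem_append_right
      exact List.mem_map.2 ⟨φ', List.mem_filter.2 ⟨hφ'l, by simp [hx]⟩, rfl⟩
    have hmemg : cFilter T' φ' x ∈ aGamma (aRestrict T n (fun e => φ' e.1 = false)) := by
      simp only [cFilter, hx, Bool.false_eq_true, if_false]
      exact perturb_filter hT' (fun e => φ' e.1 = false)
    exact mem_gamma_fold ha hmemg
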